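/- Every open subset of a Δ-generated topological space, equipped with the subspace topology, is Δ-generated. -/

import Mathlib

/-- A topological space is Δ-generated if its topology is final with respect to all
continuous maps from the standard topological simplices `Δⁿ` into it. -/
def IsDeltaGenerated (X : Type*) [TopologicalSpace X] : Prop :=
  ∀ u : Set X, IsOpen u ↔
    ∀ (n : ℕ) (f : C((stdSimplex ℝ (Fin (n + 1)) : Set (Fin (n + 1) → ℝ)), X)),
      IsOpen (f ⁻¹' u)

open Set

variable {n : ℕ}

local notation "Δ" => (stdSimplex ℝ (Fin (n+1)) : Set (Fin (n+1) → ℝ))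

noncomputable def shrink (p : Δ) (ε : ℝ) (hε0 : 0 < ε) (hε1 : ε ≤ 1) : C(Δ, Δ) :=
  ⟨fun x => ⟨ε • (x : Fin (n+1) → ℝ) + (1 - ε) • (p : Fin (n+1) → ℝ),
    (convex_stdSimplex ℝ _) x.2 p.2 hε0.le (by linarith) (by ring)⟩,
    by
      apply Continuous.subtype_mk
      fun_prop⟩

lemma shrink_apply (p : Δ) (ε : ℝ) (hε0 : 0 < ε) (hε1 : ε ≤ 1) (x : Δ) (i : Fin (n+1)) :
    (shrink p ε hε0 hε1 x : Fin (n+1) → ℝ) i = ε * (x : Fin (n+1) → ℝ) i + (1 - ε) * (p : Fin (n+1) → ℝ) i := rfl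

lemma shrink_self (p : Δ) (ε : ℝ) (hε0 : 0 < ε) (hε1 : ε ≤ 1) :
    shrink p ε hε0 hε1 p = p := by
  ext i
  rw [shrink_apply]
  ring

lemma shrink_injective (p : Δ) (ε : ℝ) (hε0 : 0 < ε) (hε1 : ε ≤ 1) :
    Function.Injective (shrink p ε hε0 hε1) := by
  intro x y hxy
  ext i
  have : (shrink p ε hε0 hε1 x : Fin (n+1) → ℝ) i = (shrink p ε hε0 hε1 y : Fin (n+1) → ℝ) i := by
    rw [hxy]
  rw [shrink_apply, shrink_apply] at this
  have hne : ε ≠ 0 := hε0.ne'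
  field_simp at this
  exact mul_left_cancel₀ hne (by linarith)

lemma dist_shrink_le (p : Δ) (ε : ℝ) (hε0 : 0 < ε) (hε1 : ε ≤ 1) (x : Δ) :
    dist (shrink p ε hε0 hε1 x) p ≤ ε := by
  rw [Subtype.dist_eq, dist_eq_norm]
  have h : ((shrink p ε hε0 hε1 x : Fin (n+1) → ℝ)) - p = ε • ((x : Fin (n+1) → ℝ) - p) := by
    funext i
    simp [shrink_apply]
    ring
  rw [show ‖Subtype.val (shrink p ε hε0 hε1 x) - Subtype.val p‖ = ‖ε • ((x : Fin (n+1) → ℝ) - p)‖ from congrArg norm h, norm_smul, Real.norm_of_nonneg hε0.le]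
  have h1 : ‖(x : Fin (n+1) → ℝ) - (p : Fin (n+1) → ℝ)‖ ≤ 1 := by
    rw [pi_norm_le_iff_of_nonneg zero_le_one]
    intro i
    have hx : (0:ℝ) ≤ x i ∧ x i ≤ 1 := mem_Icc_of_mem_stdSimplex x.2 i
    have hp : (0:ℝ) ≤ p i ∧ p i ≤ 1 := mem_Icc_of_mem_stdSimplex p.2 i
    rw [Pi.sub_apply, Real.norm_eq_abs, abs_sub_le_iff]
    exact ⟨by linarith [hx.2, hp.1], by linarith [hp.2, hx.1]⟩
  nlinarith

lemma mem_range_shrink (p : Δ) (ε : ℝ) (hε0 : 0 < ε) (hε1 : ε ≤ 1) :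
    Set.range (shrink p ε hε0 hε1) ∈ nhds p := by
  set N : Set Δ := ⋂ i, {q : Δ | (1 - ε) * (p : Fin (n+1) → ℝ) i < (q : Fin (n+1) → ℝ) i ∨ (p : Fin (n+1) → ℝ) i = 0} with hN
  have hNopen : IsOpen N := by
    apply isOpen_iInter_of_finite
    intro i
    by_cases hpi : (p : Fin (n+1) → ℝ) i = 0
    · convert isOpen_univ
      ext q; simp [hpi]
    · have : {q : Δ | (1 - ε) * (p : Fin (n+1) → ℝ) i < (q : Fin (n+1) → ℝ) i ∨ (p : Fin (n+1) → ℝ) i = 0}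
          = {q : Δ | (1 - ε) * (p : Fin (n+1) → ℝ) i < (q : Fin (n+1) → ℝ) i} := by
        ext q; simp [hpi]
      rw [this]
      exact isOpen_lt continuous_const ((continuous_apply i).comp continuous_subtype_val)
  have hpN : p ∈ N := by
    simp only [hN, mem_iInter, mem_setOf_eq]
    intro i
    rcases eq_or_lt_of_le (p.2.1 i) with h | h
    · exact Or.inr h.symm
    · exact Or.inl (by have h' : 0 < p i := h; nlinarith)
  have hNsub : N ⊆ Set.range (shrink p ε hε0 hε1) := by
    intro q hq
    simp only [hN, mem_iInter, mem_setOf_eq] at hq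
    refine ⟨⟨(p : Fin (n+1) → ℝ) + ε⁻¹ • ((q : Fin (n+1) → ℝ) - p), ?_, ?_⟩, ?_⟩
    · intro i
      simp only [Pi.add_apply, Pi.smul_apply, Pi.sub_apply, smul_eq_mul]
      rcases hq i with h | h
      · have h1 : (q : Fin (n+1) → ℝ) i - (p : Fin (n+1) → ℝ) i > -(ε * (p : Fin (n+1) → ℝ) i) := by nlinarith
        have hεinv : (0:ℝ) < ε⁻¹ := inv_pos.2 hε0
        have h2 : ε⁻¹ * (-(ε * (p : Fin (n+1) → ℝ) i)) < ε⁻¹ * ((q : Fin (n+1) → ℝ) i - (p : Fin (n+1) → ℝ) i) :=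
          mul_lt_mul_of_pos_left h1 hεinv
        have h3 : ε⁻¹ * (-(ε * (p : Fin (n+1) → ℝ) i)) = -((p : Fin (n+1) → ℝ) i) := by
          field_simp
        linarith
      · have hqi := q.2.1 i
        rw [h, sub_zero, zero_add]
        exact mul_nonneg (inv_pos.2 hε0).le hqi
    · have hsq : ∑ i, (q : Fin (n+1) → ℝ) i = 1 := q.2.2
      have hsp : ∑ i, (p : Fin (n+1) → ℝ) i = 1 := p.2.2
      simp only [Pi.add_apply, Pi.smul_apply, Pi.sub_apply, smul_eq_mul]
      rw [Finset.sum_add_distrib, ← Finset.mul_sum, Finset.sum_sub_distrib, hsq, hsp]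
      simp
    · ext i
      rw [shrink_apply]
      show ε * ((p : Fin (n+1) → ℝ) i + ε⁻¹ * ((q : Fin (n+1) → ℝ) i - (p : Fin (n+1) → ℝ) i)) + (1 - ε) * (p : Fin (n+1) → ℝ) i = (q : Fin (n+1) → ℝ) i
      rw [mul_add, ← mul_assoc, mul_inv_cancel₀ hε0.ne']
      ring
  exact Filter.mem_of_superset (hNopen.mem_nhds hpN) hNsub

/-- Every open subset of a Δ-generated space, with the subspace topology,
is Δ-generated. -/
theorem isDeltaGenerated_of_isOpen {X : Type*} [TopologicalSpace X]
    (hX : IsDeltaGenerated X) {U : Set X} (hU : IsOpen U) : IsDeltaGenerated U := by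
  intro u
  constructor
  · intro hu n f
    exact hu.preimage f.continuous
  · intro h
    -- it suffices that `val '' u` is open in `X`
    have key : IsOpen (Subtype.val '' u : Set X) := by
      rw [hX]
      intro n f
      set S : Set (stdSimplex ℝ (Fin (n+1)) : Set (Fin (n+1) → ℝ)) := f ⁻¹' (Subtype.val '' u) with hS
      rw [isOpen_iff_forall_mem_open]
      intro p hp
      -- f p ∈ U
      have hfpU : f p ∈ U := by
        obtain ⟨y, hy, hyp⟩ := hp
        rw [← hyp]; exact y.2
      -- f ⁻¹' U is open and contains p
      have hfU : IsOpen (f ⁻¹' U) := hU.preimage f.continuous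
      obtain ⟨r, hr, hball⟩ := Metric.isOpen_iff.mp hfU p hfpU
      set ε : ℝ := min (r / 2) 1 with hε
      have hε0 : 0 < ε := lt_min (by linarith) one_pos
      have hε1 : ε ≤ 1 := min_le_right _ _
      set g := shrink p ε hε0 hε1 with hg
      have hrange : ∀ x, g x ∈ f ⁻¹' U := by
        intro x
        apply hball
        rw [Metric.mem_ball]
        calc dist (g x) p ≤ ε := dist_shrink_le p ε hε0 hε1 x
        _ ≤ r/2 := min_le_left _ _
        _ < r := by linarith
      -- the composite into U
      set F : C((stdSimplex ℝ (Fin (n+1)) : Set (Fin (n+1) → ℝ)), U) :=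
        ⟨fun x => ⟨f (g x), hrange x⟩, by
          apply Continuous.subtype_mk
          exact f.continuous.comp g.continuous⟩ with hF
      have hT : IsOpen (F ⁻¹' u) := h n F
      have hTS : F ⁻¹' u = g ⁻¹' S := by
        ext x
        simp only [hF, mem_preimage, hS, ContinuousMap.coe_mk]
        constructor
        · intro hx; exact ⟨_, hx, rfl⟩
        · rintro ⟨y, hy, hyx⟩
          have : y = ⟨f (g x), hrange x⟩ := Subtype.ext hyx
          rwa [this] at hy
      -- g is an embedding
      have hemb : Topology.IsEmbedding g :=
        (g.continuous.isClosedEmbedding (shrink_injective p ε hε0 hε1)).toIsEmbedding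
      -- T is open, so its image under g is the trace of an open set
      rw [hTS] at hT
      obtain ⟨O, hO, hOT⟩ := hemb.toIsInducing.isOpen_iff.mp hT
      -- range g is a neighborhood of p
      obtain ⟨V, hVsub, hVopen, hpV⟩ := mem_nhds_iff.mp (mem_range_shrink p ε hε0 hε1)
      refine ⟨O ∩ V, ?_, hO.inter hVopen, ?_, hpV⟩
      · rintro x ⟨hxO, hxV⟩
        obtain ⟨y, hyx⟩ := hVsub hxV
        have h1 : y ∈ g ⁻¹' O := by rw [mem_preimage, hyx]; exact hxO
        rw [hOT] at h1
        rw [← hyx]; exact h1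
      · -- p ∈ O
        have h1 : p ∈ g ⁻¹' S := by
          rw [mem_preimage, hg, shrink_self]; exact hp
        rw [← hOT, mem_preimage, hg, shrink_self] at h1
        exact h1
    -- conclude
    have : u = Subtype.val ⁻¹' (Subtype.val '' u : Set X) := by
      rw [Set.preimage_image_eq _ Subtype.val_injective]
    rw [this]
    exact key.preimage continuous_subtype_val
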